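/- The existence of a BIBD(n,k,Λ) implies the existence of a configuration (1,k) GDD(n,2,k+1;λ₁,λ₂) with λ₁ = Λn and λ₂ = 2Λ(n−1)/(k−1). -/

import Mathlib

/-- A group divisible design with two groups of size `n` (the points are
`Fin 2 × Fin n`, the first coordinate indicating the group), blocks of size `k`,
each point lying in `rep` blocks, every pair of distinct points in the same
group lying in exactly `l1` blocks, and every pair of points in different
groups lying in exactly `l2` blocks. -/
structure GDD (n k l1 l2 : ℕ) where
  blocks : Multiset (Finset (Fin 2 × Fin n))
  blockCard : ∀ B ∈ blocks, B.card = k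
  rep : ℕ
  pointRep : ∀ x : Fin 2 × Fin n,
    (blocks.filter fun B => x ∈ B).card = rep
  samePairs : ∀ x y : Fin 2 × Fin n, x ≠ y → x.1 = y.1 →
    (blocks.filter fun B => x ∈ B ∧ y ∈ B).card = l1
  crossPairs : ∀ x y : Fin 2 × Fin n, x.1 ≠ y.1 →
    (blocks.filter fun B => x ∈ B ∧ y ∈ B).card = l2

/-- The design has fixed block configuration `(s,t)`: every block meets one
group in exactly `s` points and the other group in exactly `t` points. -/
def GDD.HasConfig {n k l1 l2 : ℕ} (D : GDD n k l1 l2) (s t : ℕ) : Prop :=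
  ∀ B ∈ D.blocks,
    ((B.filter fun p => p.1 = 0).card = s ∧ (B.filter fun p => p.1 = 1).card = t) ∨
    ((B.filter fun p => p.1 = 0).card = t ∧ (B.filter fun p => p.1 = 1).card = s)

/-- A balanced incomplete block design `BIBD(n,k,lam)`: a collection of
`k`-element subsets (blocks) of an `n`-set such that every pair of distinct
points lies in exactly `lam` blocks. -/
structure BIBD (n k lam : ℕ) where
  blocks : Multiset (Finset (Fin n))
  blockCard : ∀ B ∈ blocks, B.card = k
  pairs : ∀ x y : Fin n, x ≠ y →
    (blocks.filter fun B => x ∈ B ∧ y ∈ B).card = lam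

namespace S17

lemma card_filter_bind {α β : Type*} (s : Multiset α) (f : α → Multiset β)
    (p : β → Prop) [DecidablePred p] :
    ((s.bind f).filter p).card = (s.map fun a => ((f a).filter p).card).sum := by
  induction s using Multiset.induction with
  | empty => simp
  | cons a s ih => simp [Multiset.cons_bind, Multiset.filter_add, ih]

lemma card_filter_map {α β : Type*} (s : Multiset α) (f : α → β)
    (p : β → Prop) [DecidablePred p] :
    ((s.map f).filter p).card = (s.filter fun a => p (f a)).card := by
  induction s using Multiset.induction with
  | empty => simp
  | cons a s ih => by_cases h : p (f a) <;> simp [h, ih]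

lemma card_filter_eq_sum {α : Type*} (s : Multiset α) (p : α → Prop) [DecidablePred p] :
    (s.filter p).card = (s.map fun a => if p a then 1 else 0).sum := by
  induction s using Multiset.induction with
  | empty => simp
  | cons a s ih => by_cases h : p a <;> simp [h, ih, add_comm]

lemma sum_map_sum {α β : Type*} (s : Multiset α) (F : Finset β) (f : β → α → ℕ) :
    ∑ y ∈ F, (s.map (f y)).sum = (s.map fun a => ∑ y ∈ F, f y a).sum := by
  induction s using Multiset.induction with
  | empty => simp
  | cons a s ih => simp [Finset.sum_add_distrib, ih]

lemma sum_map_ite {α : Type*} (s : Multiset α) (p : α → Prop) [DecidablePred p] (c : ℕ) :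
    (s.map fun a => if p a then c else 0).sum = (s.filter p).card * c := by
  induction s using Multiset.induction with
  | empty => simp
  | cons a s ih => by_cases h : p a <;> simp [h, ih, add_mul, add_comm]

/-- The replication count identity of a BIBD. -/
lemma rep_eq {n k lam : ℕ} (D : BIBD n k lam) (x : Fin n) :
    (D.blocks.filter fun B => x ∈ B).card * (k - 1) = lam * (n - 1) := by
  have key : ∑ y ∈ Finset.univ.erase x, (D.blocks.filter fun B => x ∈ B ∧ y ∈ B).card
      = lam * (n - 1) := by
    rw [Finset.sum_congr rfl (fun y hy => D.pairs x y (Finset.ne_of_mem_erase hy).symm)]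
    simp [Finset.card_erase_of_mem, mul_comm]
  rw [← key]
  have h1 : ∀ y, (D.blocks.filter fun B => x ∈ B ∧ y ∈ B).card
      = (D.blocks.map fun B => if x ∈ B ∧ y ∈ B then 1 else 0).sum :=
    fun y => card_filter_eq_sum _ _
  simp_rw [h1]
  rw [sum_map_sum]
  have h2 : (D.blocks.map fun B => ∑ y ∈ Finset.univ.erase x,
      if x ∈ B ∧ y ∈ B then 1 else 0)
      = D.blocks.map fun B => if x ∈ B then k - 1 else 0 := by
    apply Multiset.map_congr rfl
    intro B hB
    by_cases hx : x ∈ B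
    · simp only [hx, true_and, if_true]
      have e1 : ∑ y ∈ Finset.univ.erase x, (if y ∈ B then 1 else 0)
          = ((Finset.univ.erase x).filter (· ∈ B)).card := by
        rw [Finset.card_filter]
      rw [e1]
      have e2 : (Finset.univ.erase x).filter (· ∈ B) = B.erase x := by
        ext y; simp [Finset.mem_erase, and_comm]
      rw [e2, Finset.card_erase_of_mem hx, D.blockCard B hB]
    · simp [hx]
  rw [h2, sum_map_ite]

def emb {n : ℕ} (g : Fin 2) : Fin n ↪ Fin 2 × Fin n :=
  ⟨fun a => (g, a), fun a b h => by simpa using h⟩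

def mkB {n : ℕ} (g : Fin 2) (B : Finset (Fin n)) (y : Fin n) : Finset (Fin 2 × Fin n) :=
  insert (g + 1, y) (B.map (emb g))

lemma g_succ_ne (g : Fin 2) : g + 1 ≠ g := by fin_cases g <;> decide

lemma mem_mkB {n : ℕ} {g : Fin 2} {B : Finset (Fin n)} {y : Fin n} {p : Fin 2 × Fin n} :
    p ∈ mkB g B y ↔ p = (g + 1, y) ∨ (p.1 = g ∧ p.2 ∈ B) := by
  obtain ⟨p1, p2⟩ := p
  simp only [mkB, Finset.mem_insert, Finset.mem_map, emb, Function.Embedding.coeFn_mk,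
    Prod.mk.injEq]
  constructor
  · rintro (h | ⟨a, ha, h⟩)
    · exact Or.inl h
    · exact Or.inr ⟨(Prod.mk.inj h).1.symm, (Prod.mk.inj h).2 ▸ ha⟩
  · rintro (h | ⟨h1, h2⟩)
    · exact Or.inl h
    · exact Or.inr ⟨p2, h2, by subst h1; rfl⟩

lemma card_mkB {n : ℕ} (g : Fin 2) (B : Finset (Fin n)) (y : Fin n) :
    (mkB g B y).card = B.card + 1 := by
  rw [mkB, Finset.card_insert_of_notMem, Finset.card_map]
  simp only [Finset.mem_map, emb, Function.Embedding.coeFn_mk, Prod.mk.injEq]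
  rintro ⟨a, _, h⟩
  exact g_succ_ne g (Prod.mk.inj h).1.symm

def gblocks {n k lam : ℕ} (D : BIBD n k lam) : Multiset (Finset (Fin 2 × Fin n)) :=
  (Finset.univ : Finset (Fin 2)).val.bind fun g =>
    D.blocks.bind fun B => (Finset.univ : Finset (Fin n)).val.map (mkB g B)

lemma count_gblocks {n k lam : ℕ} (D : BIBD n k lam)
    (p : Finset (Fin 2 × Fin n) → Prop) [DecidablePred p] :
    ((gblocks D).filter p).card
      = (D.blocks.map fun B => (Finset.univ.filter fun y => p (mkB 0 B y)).card).sum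
      + (D.blocks.map fun B => (Finset.univ.filter fun y => p (mkB 1 B y)).card).sum := by
  rw [gblocks, card_filter_bind]
  have h1 : ∀ (f : Fin 2 → ℕ), ((Finset.univ : Finset (Fin 2)).val.map f).sum = f 0 + f 1 := by
    intro f
    rw [← Finset.sum_eq_multiset_sum, Fin.sum_univ_two]
  rw [h1]
  congr 1 <;>
  · rw [card_filter_bind]
    refine congrArg Multiset.sum (Multiset.map_congr rfl fun B _ => ?_)
    rw [card_filter_map]
    rfl

lemma zero_ne_one' : (0 : Fin 2) ≠ 1 := by decide
lemma one_ne_zero' : (1 : Fin 2) ≠ 0 := by decide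
lemma zero_add_one : (0 : Fin 2) + 1 = 1 := rfl
lemma one_add_one : (1 : Fin 2) + 1 = 0 := rfl

/-- filter of a constant-`n` count. -/
lemma filter_card_const {n : ℕ} (c : Prop) [Decidable c] :
    ((Finset.univ : Finset (Fin n)).filter fun _ => c).card = if c then n else 0 := by
  by_cases h : c <;> simp [h]

lemma filter_card_eq {n : ℕ} (a : Fin n) :
    ((Finset.univ : Finset (Fin n)).filter fun y => y = a).card = 1 := by
  simp [Finset.filter_eq']

end S17

theorem stmt_17 (n k lam : ℕ) (D : BIBD n k lam) :
    ∃ G : GDD n (k + 1) (lam * n) (2 * lam * (n - 1) / (k - 1)), G.HasConfig 1 k := by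
  classical
  by_cases hk : k ≤ 1
  -- Degenerate case: the empty design works.
  · have hl2 : 2 * lam * (n - 1) / (k - 1) = 0 := by
      have : k - 1 = 0 := by omega
      simp [this]
    have hl1 : ∀ x y : Fin 2 × Fin n, x ≠ y → x.1 = y.1 → lam * n = 0 := by
      intro x y hxy h1
      have hn : 2 ≤ n := by
        by_contra hn
        interval_cases n
        · exact (IsEmpty.false x.2).elim
        · exact hxy (Prod.ext h1 (Subsingleton.elim _ _))
      have hlam : lam = 0 := by
        set a : Fin n := ⟨0, by omega⟩
        set c : Fin n := ⟨1, by omega⟩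
        have hac : a ≠ c := by simp [a, c, Fin.ext_iff]
        rw [← D.pairs a c hac]
        have : (D.blocks.filter fun B => a ∈ B ∧ c ∈ B) = 0 := by
          rw [Multiset.filter_eq_nil]
          intro B hB ⟨ha, hc⟩
          have h2 : ({a, c} : Finset (Fin n)) ⊆ B := by
            intro z hz
            simp only [Finset.mem_insert, Finset.mem_singleton] at hz
            rcases hz with rfl | rfl <;> assumption
          have := Finset.card_le_card h2
          rw [Finset.card_pair hac, D.blockCard B hB] at this
          omega
        simp [this]
      simp [hlam]
    rw [hl2]
    refine ⟨⟨0, by simp, 0, by simp, ?_, by simp⟩, by intro B hB; simp at hB⟩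
    intro x y hxy h1
    rw [hl1 x y hxy h1]
    simp
  -- Main case: k ≥ 2.
  · push_neg at hk
    set r := lam * (n - 1) / (k - 1) with hr
    have hk1 : 0 < k - 1 := by omega
    have hre : ∀ x : Fin n, (D.blocks.filter fun B => x ∈ B).card = r := by
      intro x
      have h := S17.rep_eq D x
      rw [hr, ← h, Nat.mul_div_cancel _ hk1]
    refine ⟨⟨S17.gblocks D, ?_, r * n + Multiset.card D.blocks, ?_, ?_, ?_⟩, ?_⟩
    -- blockCard
    · intro B' hB'
      simp only [S17.gblocks, Multiset.mem_bind, Multiset.mem_map] at hB'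
      obtain ⟨g, -, B, hB, y, -, rfl⟩ := hB'
      rw [S17.card_mkB, D.blockCard B hB]
    -- pointRep
    · rintro ⟨h, a⟩
      rw [S17.count_gblocks]
      have hcase : h = 0 ∨ h = 1 := by omega
      rcases hcase with rfl | rfl
      · have e0 : (D.blocks.map fun B =>
            (Finset.univ.filter fun y => ((0 : Fin 2), a) ∈ S17.mkB 0 B y).card)
            = D.blocks.map fun B => if a ∈ B then n else 0 := by
          refine Multiset.map_congr rfl fun B _ => ?_
          refine Eq.trans ?_ (S17.filter_card_const (n := n) (a ∈ B))
          congr 1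
          apply Finset.filter_congr
          intro y _
          simp [S17.mem_mkB, Prod.ext_iff, S17.zero_add_one, S17.zero_ne_one']
        have e1 : (D.blocks.map fun B =>
            (Finset.univ.filter fun y => ((0 : Fin 2), a) ∈ S17.mkB 1 B y).card)
            = D.blocks.map fun B => 1 := by
          refine Multiset.map_congr rfl fun B _ => ?_
          refine Eq.trans ?_ (S17.filter_card_eq a)
          congr 1
          apply Finset.filter_congr
          intro y _
          simp [S17.mem_mkB, Prod.ext_iff, S17.one_add_one, S17.zero_ne_one', eq_comm]
        rw [e0, e1, S17.sum_map_ite, hre a]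
        simp [mul_comm]
      · have e0 : (D.blocks.map fun B =>
            (Finset.univ.filter fun y => ((1 : Fin 2), a) ∈ S17.mkB 0 B y).card)
            = D.blocks.map fun B => 1 := by
          refine Multiset.map_congr rfl fun B _ => ?_
          refine Eq.trans ?_ (S17.filter_card_eq a)
          congr 1
          apply Finset.filter_congr
          intro y _
          simp [S17.mem_mkB, Prod.ext_iff, S17.zero_add_one, S17.one_ne_zero', eq_comm]
        have e1 : (D.blocks.map fun B =>
            (Finset.univ.filter fun y => ((1 : Fin 2), a) ∈ S17.mkB 1 B y).card)
            = D.blocks.map fun B => if a ∈ B then n else 0 := by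
          refine Multiset.map_congr rfl fun B _ => ?_
          refine Eq.trans ?_ (S17.filter_card_const (n := n) (a ∈ B))
          congr 1
          apply Finset.filter_congr
          intro y _
          simp [S17.mem_mkB, Prod.ext_iff, S17.one_add_one, S17.one_ne_zero']
        rw [e0, e1, S17.sum_map_ite, hre a]
        simp [mul_comm, add_comm]
    -- samePairs
    · rintro ⟨h, a⟩ ⟨h', c⟩ hxy h1
      obtain rfl : h = h' := h1
      have hac : a ≠ c := fun hac => hxy (by rw [hac])
      rw [S17.count_gblocks]
      have hcase : h = 0 ∨ h = 1 := by omega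
      rcases hcase with rfl | rfl
      · have e0 : (D.blocks.map fun B =>
            (Finset.univ.filter fun y =>
              ((0 : Fin 2), a) ∈ S17.mkB 0 B y ∧ ((0 : Fin 2), c) ∈ S17.mkB 0 B y).card)
            = D.blocks.map fun B => if a ∈ B ∧ c ∈ B then n else 0 := by
          refine Multiset.map_congr rfl fun B _ => ?_
          refine Eq.trans ?_ (S17.filter_card_const (n := n) (a ∈ B ∧ c ∈ B))
          congr 1
          apply Finset.filter_congr
          intro y _
          simp [S17.mem_mkB, Prod.ext_iff, S17.zero_add_one, S17.zero_ne_one']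
        have e1 : (D.blocks.map fun B =>
            (Finset.univ.filter fun y =>
              ((0 : Fin 2), a) ∈ S17.mkB 1 B y ∧ ((0 : Fin 2), c) ∈ S17.mkB 1 B y).card)
            = D.blocks.map fun B => 0 := by
          refine Multiset.map_congr rfl fun B _ => ?_
          rw [Finset.card_eq_zero, Finset.filter_eq_empty_iff]
          intro y _
          simp only [S17.mem_mkB, Prod.ext_iff, S17.one_add_one, S17.zero_ne_one',
            false_and, or_false]
          rintro ⟨⟨-, rfl⟩, -, hc⟩
          exact hac hc.symm
        rw [e0, e1, S17.sum_map_ite, D.pairs a c hac]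
        simp [mul_comm]
      · have e0 : (D.blocks.map fun B =>
            (Finset.univ.filter fun y =>
              ((1 : Fin 2), a) ∈ S17.mkB 0 B y ∧ ((1 : Fin 2), c) ∈ S17.mkB 0 B y).card)
            = D.blocks.map fun B => 0 := by
          refine Multiset.map_congr rfl fun B _ => ?_
          rw [Finset.card_eq_zero, Finset.filter_eq_empty_iff]
          intro y _
          simp only [S17.mem_mkB, Prod.ext_iff, S17.zero_add_one, S17.one_ne_zero',
            false_and, or_false]
          rintro ⟨⟨-, rfl⟩, -, hc⟩
          exact hac hc.symm
        have e1 : (D.blocks.map fun B =>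
            (Finset.univ.filter fun y =>
              ((1 : Fin 2), a) ∈ S17.mkB 1 B y ∧ ((1 : Fin 2), c) ∈ S17.mkB 1 B y).card)
            = D.blocks.map fun B => if a ∈ B ∧ c ∈ B then n else 0 := by
          refine Multiset.map_congr rfl fun B _ => ?_
          refine Eq.trans ?_ (S17.filter_card_const (n := n) (a ∈ B ∧ c ∈ B))
          congr 1
          apply Finset.filter_congr
          intro y _
          simp [S17.mem_mkB, Prod.ext_iff, S17.one_add_one, S17.one_ne_zero']
        rw [e0, e1, S17.sum_map_ite, D.pairs a c hac]
        simp [mul_comm]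
    -- crossPairs
    · rintro ⟨h, a⟩ ⟨h', c⟩ hne
      simp only at hne
      have hl2 : 2 * lam * (n - 1) / (k - 1) = 2 * r := by
        have hmul : lam * (n - 1) = r * (k - 1) := by
          rw [← S17.rep_eq D a, hre a]
        rw [mul_assoc, hmul, ← mul_assoc, Nat.mul_div_cancel _ hk1]
      rw [S17.count_gblocks, hl2, two_mul]
      have hne' : h ≠ h' := hne
      have hcase : h = 0 ∨ h = 1 := by omega
      have hcase' : h' = 0 ∨ h' = 1 := by omega
      rcases hcase with rfl | rfl <;> rcases hcase' with rfl | rfl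
      · exact absurd rfl hne'
      · -- x = (0,a), y = (1,c)
        have e0 : (D.blocks.map fun B =>
            (Finset.univ.filter fun y =>
              ((0 : Fin 2), a) ∈ S17.mkB 0 B y ∧ ((1 : Fin 2), c) ∈ S17.mkB 0 B y).card)
            = D.blocks.map fun B => if a ∈ B then 1 else 0 := by
          refine Multiset.map_congr rfl fun B _ => ?_
          by_cases hB : a ∈ B
          · rw [if_pos hB]
            refine Eq.trans ?_ (S17.filter_card_eq c)
            congr 1
            apply Finset.filter_congr
            intro y _
            simp [S17.mem_mkB, Prod.ext_iff, S17.zero_add_one, S17.zero_ne_one', hB, eq_comm]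
          · rw [if_neg hB, Finset.card_eq_zero, Finset.filter_eq_empty_iff]
            intro y _
            simp [S17.mem_mkB, Prod.ext_iff, S17.zero_add_one, S17.zero_ne_one', hB]
        have e1 : (D.blocks.map fun B =>
            (Finset.univ.filter fun y =>
              ((0 : Fin 2), a) ∈ S17.mkB 1 B y ∧ ((1 : Fin 2), c) ∈ S17.mkB 1 B y).card)
            = D.blocks.map fun B => if c ∈ B then 1 else 0 := by
          refine Multiset.map_congr rfl fun B _ => ?_
          by_cases hB : c ∈ B
          · rw [if_pos hB]
            refine Eq.trans ?_ (S17.filter_card_eq a)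
            congr 1
            apply Finset.filter_congr
            intro y _
            simp [S17.mem_mkB, Prod.ext_iff, S17.one_add_one, S17.zero_ne_one',
              S17.one_ne_zero', hB, eq_comm]
          · rw [if_neg hB, Finset.card_eq_zero, Finset.filter_eq_empty_iff]
            intro y _
            simp [S17.mem_mkB, Prod.ext_iff, S17.one_add_one, S17.zero_ne_one',
              S17.one_ne_zero', hB]
        rw [e0, e1, S17.sum_map_ite, S17.sum_map_ite, hre a, hre c]
        simp
      · -- x = (1,a), y = (0,c)
        have e0 : (D.blocks.map fun B =>
            (Finset.univ.filter fun y =>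
              ((1 : Fin 2), a) ∈ S17.mkB 0 B y ∧ ((0 : Fin 2), c) ∈ S17.mkB 0 B y).card)
            = D.blocks.map fun B => if c ∈ B then 1 else 0 := by
          refine Multiset.map_congr rfl fun B _ => ?_
          by_cases hB : c ∈ B
          · rw [if_pos hB]
            refine Eq.trans ?_ (S17.filter_card_eq a)
            congr 1
            apply Finset.filter_congr
            intro y _
            simp [S17.mem_mkB, Prod.ext_iff, S17.zero_add_one, S17.zero_ne_one',
              S17.one_ne_zero', hB, eq_comm]
          · rw [if_neg hB, Finset.card_eq_zero, Finset.filter_eq_empty_iff]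
            intro y _
            simp [S17.mem_mkB, Prod.ext_iff, S17.zero_add_one, S17.zero_ne_one',
              S17.one_ne_zero', hB]
        have e1 : (D.blocks.map fun B =>
            (Finset.univ.filter fun y =>
              ((1 : Fin 2), a) ∈ S17.mkB 1 B y ∧ ((0 : Fin 2), c) ∈ S17.mkB 1 B y).card)
            = D.blocks.map fun B => if a ∈ B then 1 else 0 := by
          refine Multiset.map_congr rfl fun B _ => ?_
          by_cases hB : a ∈ B
          · rw [if_pos hB]
            refine Eq.trans ?_ (S17.filter_card_eq c)
            congr 1
            apply Finset.filter_congr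
            intro y _
            simp [S17.mem_mkB, Prod.ext_iff, S17.one_add_one, S17.zero_ne_one',
              S17.one_ne_zero', hB, eq_comm]
          · rw [if_neg hB, Finset.card_eq_zero, Finset.filter_eq_empty_iff]
            intro y _
            simp [S17.mem_mkB, Prod.ext_iff, S17.one_add_one, S17.zero_ne_one',
              S17.one_ne_zero', hB]
        rw [e0, e1, S17.sum_map_ite, S17.sum_map_ite, hre a, hre c]
        simp
      · exact absurd rfl hne'
    -- HasConfig
    · intro B' hB'
      simp only [S17.gblocks, Multiset.mem_bind, Multiset.mem_map] at hB'
      obtain ⟨g, -, B, hB, y, -, rfl⟩ := hB'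
      have hcard : B.card = k := D.blockCard B hB
      have hmap0 : ∀ p ∈ B.map (S17.emb (n := n) 0), p.1 = (0 : Fin 2) := by
        intro p hp
        simp only [Finset.mem_map, S17.emb, Function.Embedding.coeFn_mk] at hp
        obtain ⟨x, -, rfl⟩ := hp
        rfl
      have hmap1 : ∀ p ∈ B.map (S17.emb (n := n) 1), p.1 = (1 : Fin 2) := by
        intro p hp
        simp only [Finset.mem_map, S17.emb, Function.Embedding.coeFn_mk] at hp
        obtain ⟨x, -, rfl⟩ := hp
        rfl
      have hcase : g = 0 ∨ g = 1 := by omega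
      rcases hcase with rfl | rfl
      · right
        constructor
        · rw [S17.mkB, S17.zero_add_one, Finset.filter_insert,
            if_neg (by exact S17.one_ne_zero'),
            Finset.filter_true_of_mem (fun p hp => hmap0 p hp), Finset.card_map, hcard]
        · rw [S17.mkB, S17.zero_add_one, Finset.filter_insert, if_pos rfl]
          have : (B.map (S17.emb (n := n) 0)).filter (fun p => p.1 = 1) = ∅ := by
            rw [Finset.filter_eq_empty_iff]
            intro p hp
            rw [hmap0 p hp]
            exact S17.zero_ne_one'
          rw [this]
          simp
      · left
        constructor
        · rw [S17.mkB, S17.one_add_one, Finset.filter_insert, if_pos rfl]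
          have : (B.map (S17.emb (n := n) 1)).filter (fun p => p.1 = 0) = ∅ := by
            rw [Finset.filter_eq_empty_iff]
            intro p hp
            rw [hmap1 p hp]
            exact S17.one_ne_zero'
          rw [this]
          simp
        · rw [S17.mkB, S17.one_add_one, Finset.filter_insert,
            if_neg (by exact S17.zero_ne_one'),
            Finset.filter_true_of_mem (fun p hp => hmap1 p hp), Finset.card_map, hcard]
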